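/- Let U ⊆ ℂ be a nonempty connected open set, let r > 0, and let G : U × B(0,r) → ℂ be complex analytic in both variables jointly. Assume there exists u₁ ∈ U such that the function y ↦ G(u₁, y) is not identically zero on any neighborhood of 0. Then there exist L ∈ ℕ and a complex analytic function c : U → ℂ, not identically zero, such that for every u ∈ U: the vanishing order at 0 of y ↦ G(u, y) is at least L, and it equals L if and only if c(u) ≠ 0. -/

import Mathlib

open Filter

/-- The vanishing order at `0` of a function `u : ℂ → ℂ`: the least `n` such that the
`n`-th Taylor coefficient of `u` at `0` is nonzero (equivalently, `iteratedDeriv n u 0 ≠ 0`),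
taken in `ℕ∞` so that it is `⊤` when no Taylor coefficient is nonzero. -/
noncomputable def ord₀ (u : ℂ → ℂ) : ℕ∞ :=
  sInf ((fun n : ℕ => (n : ℕ∞)) '' {n : ℕ | iteratedDeriv n u 0 ≠ 0})


noncomputable def Fd (G : ℂ × ℂ → ℂ) : ℕ → (ℂ × ℂ → ℂ)
  | 0 => G
  | k + 1 => fun p => fderiv ℂ (Fd G k) p (0, 1)

lemma Fd_analytic (G : ℂ × ℂ → ℂ) (S : Set (ℂ × ℂ)) (hS : IsOpen S)
    (hG : AnalyticOnNhd ℂ G S) : ∀ k, AnalyticOnNhd ℂ (Fd G k) S := by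
  intro k
  induction k with
  | zero => exact hG
  | succ k ih =>
    have h1 : AnalyticOnNhd ℂ (fderiv ℂ (Fd G k)) S := ih.fderiv
    intro p hp
    exact ((ContinuousLinearMap.apply ℂ ℂ ((0:ℂ),(1:ℂ))).analyticAt _).comp (h1 p hp)

lemma Fd_eq_iteratedDeriv (G : ℂ × ℂ → ℂ) (S : Set (ℂ × ℂ)) (hS : IsOpen S)
    (hG : AnalyticOnNhd ℂ G S) (u : ℂ) :
    ∀ k, ∀ y : ℂ, (u, y) ∈ S → iteratedDeriv k (fun y => G (u, y)) y = Fd G k (u, y) := by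
  intro k
  induction k with
  | zero => intro y _; simp [Fd, iteratedDeriv_zero]
  | succ k ih =>
    intro y hy
    rw [iteratedDeriv_succ]
    have hev : iteratedDeriv k (fun y => G (u, y)) =ᶠ[nhds y] fun y' => Fd G k (u, y') := by
      have hmem : {y' : ℂ | (u, y') ∈ S} ∈ nhds y := by
        have : Continuous fun y' : ℂ => ((u : ℂ), y') := by fun_prop
        exact this.continuousAt.preimage_mem_nhds (hS.mem_nhds hy)
      filter_upwards [hmem] with y' hy' using ih y' hy'
    rw [hev.deriv_eq]
    have hF : HasFDerivAt (Fd G k) (fderiv ℂ (Fd G k) (u, y)) (u, y) :=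
      ((Fd_analytic G S hS hG k (u, y) hy).differentiableAt).hasFDerivAt
    have hcurve : HasDerivAt (fun y' : ℂ => ((u : ℂ), y')) ((0:ℂ), (1:ℂ)) y := by
      simpa using HasDerivAt.prodMk (hasDerivAt_const y u) (hasDerivAt_id y)
    have := hF.comp_hasDerivAt y hcurve
    simpa [Fd, Function.comp_def] using this.deriv

lemma ev_zero_of_iteratedDeriv (f : ℂ → ℂ) (hf : AnalyticAt ℂ f 0)
    (h : ∀ n, iteratedDeriv n f 0 = 0) : ∀ᶠ y in nhds (0:ℂ), f y = 0 := by
  obtain ⟨s, hs, h2⟩ := hf.exists_ball_analyticOnNhd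
  have hd : DifferentiableOn ℂ f (Metric.ball 0 s) :=
    fun z hz => ((h2 z hz).differentiableAt).differentiableWithinAt
  filter_upwards [Metric.ball_mem_nhds (0:ℂ) hs] with z hz
  have := Complex.taylorSeries_eq_on_ball' hz hd
  simp only [h, mul_zero, zero_mul, tsum_zero] at this
  exact this.symm

/-- Let `U ⊆ ℂ` be a nonempty connected open set, `r > 0`, and let
`G : U × B(0,r) → ℂ` be complex analytic (jointly). If for some `u₁ ∈ U` the function
`y ↦ G(u₁, y)` is not identically zero near `0`, then there are `L ∈ ℕ` and an analytic
function `c : U → ℂ`, not identically zero, such that for every `u ∈ U` the vanishing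
order at `0` of `y ↦ G(u,y)` is at least `L`, with equality iff `c(u) ≠ 0`. -/
theorem generic_order_of_analytic_family
    (U : Set ℂ) (hUopen : IsOpen U) (hUne : U.Nonempty) (hUconn : IsConnected U)
    (r : ℝ) (hr : 0 < r) (G : ℂ × ℂ → ℂ)
    (hG : ∀ p ∈ U ×ˢ Metric.ball (0 : ℂ) r, AnalyticAt ℂ G p)
    (hne : ∃ u₁ ∈ U, ¬ ∀ᶠ y in nhds (0 : ℂ), G (u₁, y) = 0) :
    ∃ (L : ℕ) (c : ℂ → ℂ), (∀ u ∈ U, AnalyticAt ℂ c u) ∧ (∃ u ∈ U, c u ≠ 0) ∧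
      ∀ u ∈ U, (L : ℕ∞) ≤ ord₀ (fun y => G (u, y)) ∧
        (ord₀ (fun y => G (u, y)) = (L : ℕ∞) ↔ c u ≠ 0) := by
  classical
  set S : Set (ℂ × ℂ) := U ×ˢ Metric.ball (0 : ℂ) r with hSdef
  have hSopen : IsOpen S := hUopen.prod Metric.isOpen_ball
  have hGS : AnalyticOnNhd ℂ G S := hG
  have hmemS : ∀ u ∈ U, ((u : ℂ), (0 : ℂ)) ∈ S := fun u hu =>
    ⟨hu, by simpa using hr⟩
  have key : ∀ u ∈ U, ∀ n, iteratedDeriv n (fun y => G (u, y)) 0 = Fd G n (u, 0) :=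
    fun u hu n => Fd_eq_iteratedDeriv G S hSopen hGS u n 0 (hmemS u hu)
  obtain ⟨u₁, hu₁, hne₁⟩ := hne
  have hP : ∃ n, ∃ u ∈ U, Fd G n (u, 0) ≠ 0 := by
    by_contra hcon
    push_neg at hcon
    apply hne₁
    apply ev_zero_of_iteratedDeriv
    · exact (hGS _ (hmemS u₁ hu₁)).comp (analyticAt_const.prod analyticAt_id)
    · intro n
      rw [key u₁ hu₁ n]
      exact hcon n u₁ hu₁
  set L := Nat.find hP with hL
  refine ⟨L, fun u => Fd G L (u, 0), ?_, Nat.find_spec hP, ?_⟩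
  · intro u hu
    have h1 : AnalyticAt ℂ (fun z : ℂ => ((z : ℂ), (0 : ℂ))) u :=
      analyticAt_id.prod analyticAt_const
    exact AnalyticAt.comp (f := fun z : ℂ => ((z : ℂ), (0 : ℂ))) (x := u)
      (Fd_analytic G S hSopen hGS L _ (hmemS u hu)) h1
  · intro u hu
    have hlt : ∀ k < L, Fd G k (u, 0) = 0 := by
      intro k hk
      by_contra h
      exact Nat.find_min hP hk ⟨u, hu, h⟩
    have hge : (L : ℕ∞) ≤ ord₀ (fun y => G (u, y)) := by
      apply le_sInf
      rintro b ⟨n, hn, rfl⟩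
      simp only [Set.mem_setOf_eq, key u hu n] at hn
      exact Nat.cast_le.mpr (le_of_not_gt fun h => hn (hlt n h))
    refine ⟨hge, ?_, fun h => ?_⟩
    · intro heq hc0
      have h1 : ((L + 1 : ℕ) : ℕ∞) ≤ ord₀ (fun y => G (u, y)) := by
        apply le_sInf
        rintro b ⟨n, hn, rfl⟩
        simp only [Set.mem_setOf_eq, key u hu n] at hn
        refine Nat.cast_le.mpr ?_
        rcases lt_or_ge n (L + 1) with h | h
        · exfalso
          apply hn
          rcases Nat.lt_succ_iff_lt_or_eq.mp h with h' | h'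
          · exact hlt n h'
          · exact h' ▸ hc0
        · exact h
      rw [heq] at h1
      exact absurd (Nat.cast_le.mp h1) (by omega)
    · refine le_antisymm ?_ hge
      apply sInf_le
      exact ⟨L, by simpa [Set.mem_setOf_eq, key u hu L] using h, rfl⟩
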